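/- Weak Avoidance Property: if A is an atomic-reversible Left option of a guaranteed scoring game G (i.e., A is reversible through some B ∈ A^R with B ≼ G and B left-atomic, B = ⟨∅^ℓ | B^R⟩), then for any guaranteed game X with at least one Left option, there is a Left option X^L of X such that Rs(A+X) ≤ Rs(G+X^L). -/

import Mathlib

/-- A scoring game: `la`/`ra` are the atom values (relevant when the
corresponding option list is empty), `L`/`R` the Left and Right options. -/
inductive SG : Type
  | mk (la ra : ℝ) (L R : List SG) : SG

namespace SG

theorem sizeOf_lt_of_mem {g : SG} {l : List SG} (h : g ∈ l) : sizeOf g < sizeOf l :=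
  List.sizeOf_lt_of_mem h

noncomputable instance : DecidableEq SG := Classical.decEq _

def la : SG → ℝ | mk a _ _ _ => a
def ra : SG → ℝ | mk _ b _ _ => b
def L : SG → List SG | mk _ _ l _ => l
def R : SG → List SG | mk _ _ _ r => r

/-- The list of atom values occurring in atomic followers of a game. -/
def atomList : SG → List ℝ
  | mk a b ls rs =>
    (if ls.isEmpty then [a] else (ls.attach.map (fun x => atomList x.1)).flatten)
    ++ (if rs.isEmpty then [b] else (rs.attach.map (fun x => atomList x.1)).flatten)
decreasing_by all_goals (simp only [SG.mk.sizeOf_spec]; (first | (have := sizeOf_lt_of_mem x.2) | (have := sizeOf_lt_of_mem (by assumption : x ∈ _))); omega)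

/-- The guaranteed condition. -/
def Guaranteed : SG → Prop
  | mk a b ls rs =>
    (∀ x ∈ ls, Guaranteed x) ∧ (∀ x ∈ rs, Guaranteed x) ∧
    (ls = [] → ∀ s ∈ (mk a b ls rs).atomList, a ≤ s) ∧
    (rs = [] → ∀ s ∈ (mk a b ls rs).atomList, s ≤ b)
decreasing_by all_goals (simp only [SG.mk.sizeOf_spec]; (first | (have := sizeOf_lt_of_mem x.2) | (have := sizeOf_lt_of_mem (by assumption : x ∈ _))); omega)

/-- Disjunctive sum. -/
noncomputable def add : SG → SG → SG
  | mk a1 b1 L1 R1, mk a2 b2 L2 R2 =>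
    mk (a1 + a2) (b1 + b2)
      (L1.attach.map (fun x => add x.1 (mk a2 b2 L2 R2))
        ++ L2.attach.map (fun x => add (mk a1 b1 L1 R1) x.1))
      (R1.attach.map (fun x => add x.1 (mk a2 b2 L2 R2))
        ++ R2.attach.map (fun x => add (mk a1 b1 L1 R1) x.1))
termination_by g h => sizeOf g + sizeOf h
decreasing_by all_goals (simp only [SG.mk.sizeOf_spec]; (first | (have := sizeOf_lt_of_mem x.2) | (have := sizeOf_lt_of_mem (by assumption : x ∈ _))); omega)

/-- Left- and Right-stops (as a pair). -/
noncomputable def stops : SG → ℝ × ℝ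
  | mk a b ls rs =>
    (if ls.isEmpty then a else (WithBot.unbotD 0 (ls.attach.map (fun x => (stops x.1).2)).maximum),
     if rs.isEmpty then b else (WithTop.untopD 0 (rs.attach.map (fun x => (stops x.1).1)).minimum))
decreasing_by all_goals (simp only [SG.mk.sizeOf_spec]; (first | (have := sizeOf_lt_of_mem x.2) | (have := sizeOf_lt_of_mem (by assumption : x ∈ _))); omega)

noncomputable def Ls (g : SG) : ℝ := g.stops.1
noncomputable def Rs (g : SG) : ℝ := g.stops.2

/-- The conjugate: interchange Left and Right and negate atoms. -/
noncomputable def conj : SG → SG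
  | mk a b ls rs =>
    mk (-b) (-a) (rs.attach.map (fun x => conj x.1)) (ls.attach.map (fun x => conj x.1))
decreasing_by all_goals (simp only [SG.mk.sizeOf_spec]; (first | (have := sizeOf_lt_of_mem x.2) | (have := sizeOf_lt_of_mem (by assumption : x ∈ _))); omega)

/-- The game ⟨∅^s | ∅^s⟩ of a real number `s`. -/
def num (s : ℝ) : SG := mk s s [] []

/-- The zero game ⟨∅^0 | ∅^0⟩. -/
def zero : SG := num 0

/-- Waiting moves: the image of the Normal-play integer `n`. -/
def wait : ℕ → SG
  | 0 => zero
  | n + 1 => mk 0 0 [wait n] []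

/-- Birthday: the depth of the game tree. -/
def birthday : SG → ℕ
  | mk _ _ ls rs =>
    max (WithBot.unbotD 0 (ls.attach.map (fun x => birthday x.1 + 1)).maximum)
        (WithBot.unbotD 0 (rs.attach.map (fun x => birthday x.1 + 1)).maximum)
decreasing_by all_goals (simp only [SG.mk.sizeOf_spec]; (first | (have := sizeOf_lt_of_mem x.2) | (have := sizeOf_lt_of_mem (by assumption : x ∈ _))); omega)

/-- `Ge G H` is the order `G ≽ H`. -/
def Ge (G H : SG) : Prop :=
  ∀ X : SG, X.Guaranteed → Ls (G.add X) ≥ Ls (H.add X) ∧ Rs (G.add X) ≥ Rs (H.add X)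

/-- Equivalence `G ∼ H`. -/
def Equiv (G H : SG) : Prop := Ge G H ∧ Ge H G

/-- Right's pass-allowed Left-stop `L̲s(G) = min_n Ls(G - n̂)`. -/
noncomputable def lsU (G : SG) : ℝ := ⨅ n : ℕ, Ls (G.add (wait n).conj)

/-- Left's pass-allowed Right-stop `R̄s(G) = max_n Rs(G + n̂)`. -/
noncomputable def rsO (G : SG) : ℝ := ⨆ n : ℕ, Rs (G.add (wait n))

/-- `L̄s(G) = max_n Ls(G + n̂)`. -/
noncomputable def lsO (G : SG) : ℝ := ⨆ n : ℕ, Ls (G.add (wait n))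

/-- `R̲s(G) = min_n Rs(G + n̂)`. -/
noncomputable def rsU (G : SG) : ℝ := ⨅ n : ℕ, Rs (G.add (wait n))

/-- Identity of games: same tree structure (up to reordering of options),
with identical atoms at atomic positions. -/
def Ident : SG → SG → Prop
  | mk a1 b1 L1 R1, mk a2 b2 L2 R2 =>
    (L1 = [] ↔ L2 = []) ∧ (L1 = [] → a1 = a2) ∧
    (R1 = [] ↔ R2 = []) ∧ (R1 = [] → b1 = b2) ∧
    (∀ x ∈ L1, ∃ y : {z // z ∈ L2}, Ident x y.1) ∧
    (∀ y ∈ L2, ∃ x : {z // z ∈ L1}, Ident x.1 y) ∧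
    (∀ x ∈ R1, ∃ y : {z // z ∈ R2}, Ident x y.1) ∧
    (∀ y ∈ R2, ∃ x : {z // z ∈ R1}, Ident x.1 y)
termination_by g h => sizeOf g
decreasing_by all_goals (simp only [SG.mk.sizeOf_spec]; (first | (have := sizeOf_lt_of_mem x.2) | (have := sizeOf_lt_of_mem (by assumption : x ∈ _))); omega)

/-- `Linked H G`: `H` is linked to `G` (by some guaranteed `T`). -/
def Linked (H G : SG) : Prop :=
  ∃ T : SG, T.Guaranteed ∧ Ls (H.add T) < 0 ∧ 0 < Rs (G.add T)

/-- Replace every atom of `G` by `∅^x`. -/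
def subst (v : ℝ) : SG → SG
  | mk _ _ ls rs =>
    mk v v (ls.attach.map (fun x => subst v x.1)) (rs.attach.map (fun x => subst v x.1))
decreasing_by all_goals (simp only [SG.mk.sizeOf_spec]; (first | (have := sizeOf_lt_of_mem x.2) | (have := sizeOf_lt_of_mem (by assumption : x ∈ _))); omega)

/-- The maximum atom value in `G`. -/
noncomputable def maxAtom (G : SG) : ℝ := WithBot.unbotD 0 G.atomList.maximum

/-- The minimum atom value in `G`. -/
noncomputable def minAtom (G : SG) : ℝ := WithTop.untopD 0 G.atomList.minimum

lemma add_mk (a1 b1 : ℝ) (L1 R1 : List SG) (a2 b2 : ℝ) (L2 R2 : List SG) :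
    (mk a1 b1 L1 R1).add (mk a2 b2 L2 R2) =
    mk (a1 + a2) (b1 + b2)
      (L1.attach.map (fun x => add x.1 (mk a2 b2 L2 R2))
        ++ L2.attach.map (fun x => add (mk a1 b1 L1 R1) x.1))
      (R1.attach.map (fun x => add x.1 (mk a2 b2 L2 R2))
        ++ R2.attach.map (fun x => add (mk a1 b1 L1 R1) x.1)) := by
  rw [add]

lemma mem_R_add_left {A X r : SG} (h : r ∈ A.R) : r.add X ∈ (A.add X).R := by
  obtain ⟨a1, b1, L1, R1⟩ := A
  obtain ⟨a2, b2, L2, R2⟩ := X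
  rw [add_mk]
  simp only [R, List.mem_append, List.mem_map]
  exact Or.inl ⟨⟨r, h⟩, List.mem_attach _ _, rfl⟩

lemma Ls_mk (a b : ℝ) (ls rs : List SG) :
    Ls (mk a b ls rs) =
      if ls.isEmpty then a
      else (WithBot.unbotD 0 (ls.attach.map (fun x => (stops x.1).2)).maximum) := by
  rw [Ls, stops]

lemma Rs_mk (a b : ℝ) (ls rs : List SG) :
    Rs (mk a b ls rs) =
      if rs.isEmpty then b
      else (WithTop.untopD 0 (rs.attach.map (fun x => (stops x.1).1)).minimum) := by
  rw [Rs, stops]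

lemma Rs_le_Ls_of_mem {g r : SG} (h : r ∈ g.R) : Rs g ≤ Ls r := by
  obtain ⟨a, b, ls, rs⟩ := g
  simp only [R] at h
  have hne : rs ≠ [] := List.ne_nil_of_mem h
  rw [Rs_mk, if_neg (by simpa [List.isEmpty_iff] using hne)]
  have hmem : Ls r ∈ rs.attach.map (fun x => (stops x.1).1) :=
    List.mem_map.2 ⟨⟨r, h⟩, List.mem_attach _ _, rfl⟩
  have hmin := List.minimum_le_of_mem' hmem
  cases hm : (rs.attach.map (fun x => (stops x.1).1)).minimum with
  | top =>
    rw [hm] at hmin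
    exact absurd hmin (by simp)
  | coe m =>
    rw [hm] at hmin
    simpa [WithTop.untopD] using (by exact_mod_cast hmin : m ≤ Ls r)

lemma exists_Ls_le_Rs {g : SG} (h : g.L ≠ []) : ∃ l ∈ g.L, Ls g ≤ Rs l := by
  obtain ⟨a, b, ls, rs⟩ := g
  simp only [L] at h ⊢
  rw [Ls_mk, if_neg (by simpa [List.isEmpty_iff] using h)]
  have hne : ls.attach.map (fun x => (stops x.1).2) ≠ [] := by
    simp [List.map_eq_nil_iff, h]
  obtain ⟨m, hm⟩ := List.maximum_ne_bot_of_ne_nil hne |> Option.ne_none_iff_exists'.1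
  have hmmem : m ∈ ls.attach.map (fun x => (stops x.1).2) := List.maximum_mem hm
  obtain ⟨x, _, hx⟩ := List.mem_map.1 hmmem
  refine ⟨x.1, x.2, ?_⟩
  rw [hm, Rs, ← hx]
  exact le_of_eq rfl

lemma guaranteed_of_mem_L {g x : SG} (hg : g.Guaranteed) (h : x ∈ g.L) :
    x.Guaranteed := by
  obtain ⟨a, b, ls, rs⟩ := g
  rw [Guaranteed] at hg
  exact hg.1 x h

/-- Weak Avoidance Property: nobody wants to move to an atomic-reversible
option. -/
theorem weak_avoidance (G A B X : SG) (hG : G.Guaranteed) (hX : X.Guaranteed)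
    (hA : A ∈ G.L) (hB : B ∈ A.R) (hatom : B.L = []) (hrev : G.Ge B)
    (hXL : X.L ≠ []) : ∃ Xl ∈ X.L, Rs (A.add X) ≤ Rs (G.add Xl) := by
  -- Rs(A+X) ≤ Ls(B+X)
  have h1 : Rs (A.add X) ≤ Ls (B.add X) := Rs_le_Ls_of_mem (mem_R_add_left hB)
  -- Ls(B+X) ≤ Rs of some left option of B+X
  have hne : (B.add X).L ≠ [] := by
    obtain ⟨a1, b1, L1, R1⟩ := B
    obtain ⟨a2, b2, L2, R2⟩ := X
    simp only [L] at hatom hXL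
    rw [add_mk]
    simp [L, hatom, hXL]
  obtain ⟨l, hl, h2⟩ := exists_Ls_le_Rs hne
  -- l = B.add Xl for some Xl ∈ X.L
  obtain ⟨Xl, hXl, rfl⟩ : ∃ Xl ∈ X.L, l = B.add Xl := by
    obtain ⟨a1, b1, L1, R1⟩ := B
    obtain ⟨a2, b2, L2, R2⟩ := X
    simp only [L] at hatom ⊢
    subst hatom
    rw [add_mk] at hl
    simp only [L, List.attach_nil, List.map_nil, List.nil_append,
      List.mem_map] at hl
    obtain ⟨x, _, hx⟩ := hl
    exact ⟨x.1, x.2, hx.symm⟩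
  have hXlG : Xl.Guaranteed := guaranteed_of_mem_L hX hXl
  have h3 := (hrev Xl hXlG).2
  exact ⟨Xl, hXl, h1.trans (h2.trans h3)⟩

end SG
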